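/- Let L, M ∈ K[D] and N = lclm(L, M), and suppose V(N) = V(L) + V(M) in a suitable extension field. If [P]_N is a nonzero completely integral element of K[D]/⟨N⟩, then at least one of [P]_L, [P]_M is a nonzero completely integral element of the respective quotient module; moreover if [P]_N is a pseudoconstant then at least one of [P]_L, [P]_M is a pseudoconstant. -/

import Mathlib

/- Framework: linear differential operators over K = C(x), represented as
   `Polynomial (RatFunc C)` where `X^i` stands for `D^i` (coefficients on the left);
   local (Puiseux/Hahn series) solutions at finite points and at infinity;
   integrality; constants and pseudoconstants of `K[D]/⟨L⟩`. -/

noncomputable section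
open Polynomial

variable (C : Type) [Field C] [IsAlgClosed C] [CharZero C]

/-- The derivative d/dx on K = C(x). -/
def KDeriv (r : RatFunc C) : RatFunc C :=
  (algebraMap (Polynomial C) (RatFunc C) (derivative r.num) * algebraMap _ _ r.denom
    - algebraMap _ _ r.num * algebraMap _ _ (derivative r.denom))
  / (algebraMap (Polynomial C) (RatFunc C) r.denom) ^ 2

/-- Linear differential operators `∑ aᵢ Dⁱ` with `aᵢ ∈ C(x)`, encoded as polynomials
    whose `i`-th coefficient is the coefficient of `Dⁱ`. -/
abbrev DOp := Polynomial (RatFunc C)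

/-- Left multiplication by `D` in `K[D]`: `D·(∑ aᵢ Dⁱ) = ∑ aᵢ Dⁱ⁺¹ + ∑ aᵢ' Dⁱ`. -/
def Dmul (P : DOp C) : DOp C :=
  X * P + P.sum fun i a => Polynomial.C (KDeriv C a) * X ^ i

/-- Multiplication (composition) in the noncommutative ring `K[D]`. -/
def opMul (P Q : DOp C) : DOp C :=
  P.sum fun i a => Polynomial.C a * (Dmul C)^[i] Q

/-- The adjoint `L ↦ L*`: `(∑ aᵢ Dⁱ)* = ∑ (−D)ⁱ aᵢ`. -/
def adjoint (L : DOp C) : DOp C :=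
  L.sum fun i a => (-1) ^ i * (Dmul C)^[i] (Polynomial.C a)

/-- Application of an operator to an element of `K` itself (rational solutions). -/
def KApply (L : DOp C) (q : RatFunc C) : RatFunc C :=
  L.sum fun i a => a * (KDeriv C)^[i] q

/-- `[P]_L` is zero in `K[D]/⟨L⟩`, i.e. `P` is a left multiple of `L`. -/
def IsZeroClass (L P : DOp C) : Prop := ∃ Q : DOp C, P = opMul C Q L

/-- `[P]_L` is a constant of `K[D]/⟨L⟩`, i.e. `D·[P]_L = [0]_L`. -/
def IsConstantClass (L P : DOp C) : Prop := ∃ Q : DOp C, Dmul C P = opMul C Q L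

/-- `N = lclm(L, M)`: the monic common left multiple of `L` and `M` of lowest order. -/
def IsLCLM (L M N : DOp C) : Prop :=
  N.Monic ∧ (∃ A, N = opMul C A L) ∧ (∃ B, N = opMul C B M) ∧
    ∀ N' : DOp C, N'.Monic → (∃ A, N' = opMul C A L) → (∃ B, N' = opMul C B M) →
      N.natDegree ≤ N'.natDegree

/-- A differential field extension of `K = C(x)`. -/
structure DiffExt where
  carrier : Type
  [isField : Field carrier]
  [isAlgK : Algebra (RatFunc C) carrier]
  [isAlgC : Algebra C carrier]
  [isTower : IsScalarTower C (RatFunc C) carrier]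
  δ : carrier → carrier
  δ_add : ∀ a b, δ (a + b) = δ a + δ b
  δ_mul : ∀ a b, δ (a * b) = a * δ b + δ a * b
  δ_algebraMap : ∀ r : RatFunc C,
    δ (algebraMap (RatFunc C) carrier r) = algebraMap (RatFunc C) carrier (KDeriv C r)

attribute [instance] DiffExt.isField DiffExt.isAlgK DiffExt.isAlgC DiffExt.isTower

/-- Application of an operator `L = ∑ aᵢ Dⁱ` to an element of a differential extension. -/
def DiffExt.apply (F : DiffExt C) (L : DOp C) (f : F.carrier) : F.carrier :=
  L.sum fun i a => algebraMap (RatFunc C) F.carrier a * F.δ^[i] f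

/-- Formal derivative `d/dt` on generalized (Hahn/Puiseux) series with rational exponents. -/
def hderiv (f : HahnSeries ℚ C) : HahnSeries ℚ C :=
  HahnSeries.embDomain (OrderIso.addRight (-1 : ℚ)).toOrderEmbedding
    { coeff := fun γ => γ • f.coeff γ,
      isPWO_support' := f.isPWO_support.mono (by
        intro γ hγ
        simp only [Function.mem_support, ne_eq] at hγ ⊢
        intro hc
        exact hγ (by rw [hc, smul_zero]) ) }

/-- The derivation `d/dx = -t² d/dt` on series at infinity, in the local coordinate `t = 1/x`. -/
def dinf (f : HahnSeries ℚ C) : HahnSeries ℚ C :=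
  -(HahnSeries.single (2 : ℚ) (1 : C) * hderiv C f)

/-- `ι` is a series expansion of `C(x)` (at a finite point for `δ = hderiv`, at infinity
    for `δ = dinf`), i.e. a ring embedding compatible with differentiation. -/
def IsExpansion (δ : HahnSeries ℚ C → HahnSeries ℚ C)
    (ι : RatFunc C →+* HahnSeries ℚ C) : Prop :=
  ∀ r, ι (KDeriv C r) = δ (ι r)

/-- Application of an operator to a local series solution via the expansion `ι`. -/
def localApply (δ : HahnSeries ℚ C → HahnSeries ℚ C)
    (ι : RatFunc C →+* HahnSeries ℚ C) (L : DOp C) (f : HahnSeries ℚ C) : HahnSeries ℚ C :=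
  L.sum fun i a => ι a * δ^[i] f

/-- A series is integral if it has no pole, i.e. all exponents are ≥ 0. -/
def IntegralSeries (f : HahnSeries ℚ C) : Prop := ∀ γ < (0 : ℚ), f.coeff γ = 0

/-- `[P]_L` is completely integral: at every point of `C ∪ {∞}` and every local series
    solution `f` of `L` there, `P·f` has no pole. -/
def CompletelyIntegral (L P : DOp C) : Prop :=
  ∀ δ ∈ ({hderiv C, dinf C} : Set (HahnSeries ℚ C → HahnSeries ℚ C)),
    ∀ ι : RatFunc C →+* HahnSeries ℚ C, IsExpansion C δ ι →
      ∀ f : HahnSeries ℚ C, localApply C δ ι L f = 0 →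
        IntegralSeries C (localApply C δ ι P f)

/-- A pseudoconstant of `L`: a completely integral element of `K[D]/⟨L⟩` that is not
    a constant. -/
def IsPseudoconstant (L P : DOp C) : Prop :=
  CompletelyIntegral C L P ∧ ¬ IsConstantClass C L P

def HasPseudoconstant (L : DOp C) : Prop := ∃ P : DOp C, IsPseudoconstant C L P

/-- `S` is the `s`-th symmetric power of `L`: the monic operator of minimal order
    annihilating all products of `s` solutions of `L`. -/
def IsSymPow (L S : DOp C) (s : ℕ) : Prop :=
  S.Monic ∧
  (∀ F : DiffExt C, ∀ f : Fin s → F.carrier,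
      (∀ i, F.apply C L (f i) = 0) → F.apply C S (∏ i, f i) = 0) ∧
  (∀ S' : DOp C, S'.Monic →
      (∀ F : DiffExt C, ∀ f : Fin s → F.carrier,
        (∀ i, F.apply C L (f i) = 0) → F.apply C S' (∏ i, f i) = 0) →
      S.natDegree ≤ S'.natDegree)

/-- `L` has only algebraic solutions: there is an algebraic differential extension of `K`
    in which the solution space of `L` has dimension `ord L`. -/
def AllAlgebraic (L : DOp C) : Prop :=
  ∃ F : DiffExt C, Algebra.IsAlgebraic (RatFunc C) F.carrier ∧
    ∃ b : Fin L.natDegree → F.carrier,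
      (∀ i, F.apply C L (b i) = 0) ∧ LinearIndependent C b

set_option linter.unusedSectionVars false

local notation "am" => algebraMap (Polynomial C) (RatFunc C)

lemma KDeriv_spec (p q : Polynomial C) (hq : q ≠ 0) :
    KDeriv C (am p / am q) =
      (am (derivative p) * am q - am p * am (derivative q)) / (am q) ^ 2 := by
  set r : RatFunc C := am p / am q with hr
  have hd : r.denom ≠ 0 := r.denom_ne_zero
  have hdq : am q ≠ 0 := RatFunc.algebraMap_ne_zero hq
  have hdd : am r.denom ≠ 0 := RatFunc.algebraMap_ne_zero hd
  have hcross : r.num * q = p * r.denom := by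
    apply RatFunc.algebraMap_injective C
    rw [map_mul, map_mul, ← div_eq_div_iff hdd hdq]
    rw [RatFunc.num_div_denom r]
  have hdcross : derivative r.num * q + r.num * derivative q
      = derivative p * r.denom + p * derivative r.denom := by
    have := congrArg derivative hcross
    rwa [derivative_mul, derivative_mul] at this
  have hpoly : (derivative r.num * r.denom - r.num * derivative r.denom) * q ^ 2
      = (derivative p * q - p * derivative q) * r.denom ^ 2 := by
    linear_combination (q * r.denom) * hdcross
      - (derivative q * r.denom + derivative r.denom * q) * hcross
  rw [KDeriv, div_eq_div_iff (pow_ne_zero 2 hdd) (pow_ne_zero 2 hdq)]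
  rw [← map_pow, ← map_pow, ← map_mul, ← map_mul, ← map_mul, ← map_mul, ← map_sub, ← map_sub,
    ← map_mul, ← map_mul]
  exact congrArg _ hpoly

lemma KDeriv_zero : KDeriv C 0 = 0 := by
  simp [KDeriv]

lemma ratfunc_repr (r : RatFunc C) : r = am r.num / am r.denom := (RatFunc.num_div_denom r).symm

lemma KDeriv_def (r : RatFunc C) : KDeriv C r =
    (am (derivative r.num) * am r.denom - am r.num * am (derivative r.denom))
      / (am r.denom) ^ 2 := rfl

lemma KDeriv_add (r s : RatFunc C) : KDeriv C (r + s) = KDeriv C r + KDeriv C s := by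
  obtain ⟨p, q, hq, rfl⟩ : ∃ n d, d ≠ 0 ∧ r = am n / am d :=
    ⟨r.num, r.denom, r.denom_ne_zero, (ratfunc_repr C r)⟩
  obtain ⟨u, v, hv, rfl⟩ : ∃ n d, d ≠ 0 ∧ s = am n / am d :=
    ⟨s.num, s.denom, s.denom_ne_zero, (ratfunc_repr C s)⟩
  have h1 : am q ≠ 0 := RatFunc.algebraMap_ne_zero hq
  have h2 : am v ≠ 0 := RatFunc.algebraMap_ne_zero hv
  rw [div_add_div _ _ h1 h2, ← map_mul, ← map_mul, ← map_mul, ← map_add,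
    KDeriv_spec C _ _ (mul_ne_zero hq hv), KDeriv_spec C _ _ hq, KDeriv_spec C _ _ hv]
  simp only [derivative_add, derivative_mul, map_add, map_mul]
  field_simp
  ring

lemma KDeriv_mul (r s : RatFunc C) :
    KDeriv C (r * s) = r * KDeriv C s + KDeriv C r * s := by
  obtain ⟨p, q, hq, rfl⟩ : ∃ n d, d ≠ 0 ∧ r = am n / am d :=
    ⟨r.num, r.denom, r.denom_ne_zero, (ratfunc_repr C r)⟩
  obtain ⟨u, v, hv, rfl⟩ : ∃ n d, d ≠ 0 ∧ s = am n / am d :=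
    ⟨s.num, s.denom, s.denom_ne_zero, (ratfunc_repr C s)⟩
  have h1 : am q ≠ 0 := RatFunc.algebraMap_ne_zero hq
  have h2 : am v ≠ 0 := RatFunc.algebraMap_ne_zero hv
  rw [div_mul_div_comm, ← map_mul, ← map_mul,
    KDeriv_spec C _ _ (mul_ne_zero hq hv), KDeriv_spec C _ _ hq, KDeriv_spec C _ _ hv]
  simp only [derivative_mul, map_add, map_mul]
  field_simp
  ring





lemma opMul_zero_left (R : DOp C) : opMul C 0 R = 0 := Polynomial.sum_zero_index _

lemma opMul_add_left (P P' R : DOp C) :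
    opMul C (P + P') R = opMul C P R + opMul C P' R := by
  unfold opMul
  exact Polynomial.sum_add_index P P' _ (fun i => by simp) (fun i a b => by
    rw [map_add, add_mul])

lemma opMul_C_mul_left (c : RatFunc C) (P R : DOp C) :
    opMul C (Polynomial.C c * P) R = Polynomial.C c * opMul C P R := by
  unfold opMul
  rw [← smul_eq_C_mul, Polynomial.sum_smul_index _ _ _ (fun i => by simp),
    Polynomial.sum_def, Polynomial.sum_def, Finset.mul_sum]
  exact Finset.sum_congr rfl fun i _ => by rw [map_mul, mul_assoc]

lemma opMul_monomial (n : ℕ) (a : RatFunc C) (R : DOp C) :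
    opMul C (Polynomial.monomial n a) R = Polynomial.C a * (Dmul C)^[n] R :=
  Polynomial.sum_monomial_index a _ (by simp)

lemma opMul_sub_left (P P' R : DOp C) :
    opMul C (P - P') R = opMul C P R - opMul C P' R := by
  have h : opMul C (P - P') R + opMul C P' R = opMul C P R := by
    rw [← opMul_add_left, sub_add_cancel]
  exact eq_sub_of_add_eq h

lemma Dmul_monomial (n : ℕ) (a : RatFunc C) :
    Dmul C (Polynomial.monomial n a)
      = Polynomial.monomial (n+1) a + Polynomial.monomial n (KDeriv C a) := by
  unfold Dmul
  rw [Polynomial.sum_monomial_index _ _ (by simp [KDeriv_zero]),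
    C_mul_X_pow_eq_monomial, X_mul_monomial]

lemma Dmul_add (P P' : DOp C) : Dmul C (P + P') = Dmul C P + Dmul C P' := by
  unfold Dmul
  rw [Polynomial.sum_add_index P P' _ (fun i => by simp [KDeriv_zero])
    (fun i a b => by rw [KDeriv_add, map_add, add_mul])]
  ring

lemma Dmul_C_mul (a : RatFunc C) (S : DOp C) :
    Dmul C (Polynomial.C a * S)
      = Polynomial.C a * Dmul C S + Polynomial.C (KDeriv C a) * S := by
  unfold Dmul
  rw [← smul_eq_C_mul, Polynomial.sum_smul_index _ _ _ (fun i => by simp [KDeriv_zero])]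
  have h1 : (S.sum fun i b => Polynomial.C (KDeriv C (a * b)) * X ^ i)
      = Polynomial.C a * (S.sum fun i b => Polynomial.C (KDeriv C b) * X ^ i)
        + Polynomial.C (KDeriv C a) * S := by
    have step : (S.sum fun i b => Polynomial.C (KDeriv C (a * b)) * X ^ i)
        = S.sum fun i b => (Polynomial.C a * (Polynomial.C (KDeriv C b) * X ^ i)
            + Polynomial.C (KDeriv C a) * (Polynomial.C b * X ^ i)) := by
      rw [Polynomial.sum_def, Polynomial.sum_def]
      refine Finset.sum_congr rfl fun i _ => ?_
      rw [KDeriv_mul, map_add, map_mul, map_mul]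
      ring
    rw [step, Polynomial.sum_add]
    congr 1
    · rw [Polynomial.sum_def, Polynomial.sum_def, Finset.mul_sum]
    · conv_rhs => rw [← Polynomial.sum_C_mul_X_pow_eq S]
      rw [Polynomial.sum_def, Polynomial.sum_def, Finset.mul_sum]
  rw [h1, smul_eq_C_mul]
  ring

lemma opMul_Dmul (Q R : DOp C) : opMul C (Dmul C Q) R = Dmul C (opMul C Q R) := by
  induction Q using Polynomial.induction_on' with
  | add p q hp hq => rw [Dmul_add, opMul_add_left, opMul_add_left, hp, hq, Dmul_add]
  | monomial n a =>
      rw [Dmul_monomial, opMul_add_left, opMul_monomial, opMul_monomial, opMul_monomial,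
        Function.iterate_succ_apply', Dmul_C_mul]

lemma opMul_iter_Dmul (k : ℕ) (Q R : DOp C) :
    opMul C ((Dmul C)^[k] Q) R = (Dmul C)^[k] (opMul C Q R) := by
  induction k with
  | zero => rfl
  | succ k ih =>
      rw [Function.iterate_succ_apply', Function.iterate_succ_apply', opMul_Dmul, ih]

lemma opMul_assoc (P Q R : DOp C) :
    opMul C (opMul C P Q) R = opMul C P (opMul C Q R) := by
  induction P using Polynomial.induction_on' with
  | add p q hp hq => rw [opMul_add_left, opMul_add_left, opMul_add_left, hp, hq]
  | monomial n a =>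
      rw [opMul_monomial, opMul_C_mul_left, opMul_iter_Dmul, opMul_monomial]


lemma Dmul_monic {P : DOp C} (hP : P.Monic) :
    (Dmul C P).Monic ∧ (Dmul C P).degree = P.degree + 1 := by
  have hP0 : P ≠ 0 := hP.ne_zero
  have hsum : (P.sum fun i a => Polynomial.C (KDeriv C a) * X ^ i).degree ≤ P.degree := by
    rw [Polynomial.sum_def]
    refine le_trans (Polynomial.degree_sum_le _ _) ?_
    refine Finset.sup_le fun i hi => le_trans (degree_C_mul_X_pow_le i _) ?_
    exact Polynomial.le_degree_of_ne_zero (Polynomial.mem_support_iff.mp hi)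
  have hXP : (X * P).degree = P.degree + 1 := by
    rw [mul_comm, Polynomial.degree_mul_X]
  have hdeglt : P.degree < P.degree + 1 := by
    rw [Polynomial.degree_eq_natDegree hP0]
    exact_mod_cast Nat.lt_succ_self _
  have hlt : (P.sum fun i a => Polynomial.C (KDeriv C a) * X ^ i).degree < (X * P).degree := by
    rw [hXP]; exact lt_of_le_of_lt hsum hdeglt
  constructor
  · unfold Polynomial.Monic Dmul
    rw [add_comm, Polynomial.leadingCoeff_add_of_degree_lt hlt, mul_comm,
      Polynomial.leadingCoeff_mul_X]
    exact hP
  · unfold Dmul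
    rw [Polynomial.degree_add_eq_left_of_degree_lt hlt, hXP]

lemma Dmul_iter_monic {N : DOp C} (hN : N.Monic) (k : ℕ) :
    ((Dmul C)^[k] N).Monic ∧ ((Dmul C)^[k] N).degree = N.degree + k := by
  induction k with
  | zero => exact ⟨hN, by simp⟩
  | succ k ih =>
      rw [Function.iterate_succ_apply']
      refine ⟨(Dmul_monic C ih.1).1, ?_⟩
      rw [(Dmul_monic C ih.1).2, ih.2, add_assoc]
      norm_cast

lemma sub_step (N P : DOp C) (hN : N.Monic) (hX0 : P ≠ 0) (hge : N.degree ≤ P.degree) :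
    ∃ G Y : DOp C, P = opMul C G N + Y ∧ Y.degree < P.degree := by
  set k := P.natDegree - N.natDegree with hk
  set c := P.leadingCoeff with hc
  have hc0 : c ≠ 0 := Polynomial.leadingCoeff_ne_zero.mpr hX0
  have hnd : N.natDegree ≤ P.natDegree := Polynomial.natDegree_le_natDegree hge
  have hkd : N.natDegree + k = P.natDegree := by omega
  obtain ⟨hM, hMdeg⟩ := Dmul_iter_monic C hN k
  set M := (Dmul C)^[k] N with hMdef
  have hMnd : M.natDegree = P.natDegree := by
    apply Polynomial.natDegree_eq_of_degree_eq_some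
    rw [hMdeg, Polynomial.degree_eq_natDegree hN.ne_zero, ← hkd]
    norm_cast
  set T := Polynomial.C c * M with hT
  have hTeq : opMul C (Polynomial.C c * X ^ k) N = T := by
    rw [C_mul_X_pow_eq_monomial, opMul_monomial]
  have hT0 : T ≠ 0 := mul_ne_zero (by simpa using hc0) hM.ne_zero
  have hTnd : T.natDegree = P.natDegree := by rw [hT, Polynomial.natDegree_C_mul hc0, hMnd]
  have hdeg : P.degree = T.degree := by
    rw [Polynomial.degree_eq_natDegree hX0, Polynomial.degree_eq_natDegree hT0, hTnd]
  have hlc : P.leadingCoeff = T.leadingCoeff := by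
    rw [hT, Polynomial.leadingCoeff_mul, Polynomial.leadingCoeff_C, hM.leadingCoeff, mul_one]
  refine ⟨Polynomial.C c * X ^ k, P - T, ?_, Polynomial.degree_sub_lt hdeg hX0 hlc⟩
  rw [hTeq]; ring

lemma opDiv (N : DOp C) (hN : N.Monic) :
    ∀ P : DOp C, ∃ Q R : DOp C, P = opMul C Q N + R ∧ R.degree < N.degree := by
  have hN0 : N ≠ 0 := hN.ne_zero
  have hNbot : (⊥ : WithBot ℕ) < N.degree := by
    exact Ne.bot_lt fun h => hN0 (Polynomial.degree_eq_bot.mp h)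
  suffices key : ∀ n : ℕ, ∀ P : DOp C, P.natDegree ≤ n →
      ∃ Q R : DOp C, P = opMul C Q N + R ∧ R.degree < N.degree by
    intro P; exact key P.natDegree P le_rfl
  intro n
  induction n with
  | zero =>
      intro P hX
      by_cases hlt : P.degree < N.degree
      · exact ⟨0, P, by rw [opMul_zero_left, zero_add], hlt⟩
      · push_neg at hlt
        have hX0 : P ≠ 0 := by
          intro h; rw [h, Polynomial.degree_zero] at hlt
          exact absurd (lt_of_le_of_lt hlt hNbot) (lt_irrefl _)
        obtain ⟨G, Y, hGY, hYlt⟩ := sub_step C N P hN hX0 hlt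
        have hXdeg : P.degree = 0 := by
          rw [Polynomial.degree_eq_natDegree hX0, Nat.le_zero.mp hX]; rfl
        have hNdeg : N.degree = 0 :=
          le_antisymm (hXdeg ▸ hlt) (Polynomial.zero_le_degree_iff.mpr hN0)
        exact ⟨G, Y, hGY, by rw [hNdeg, ← hXdeg]; exact hYlt⟩
  | succ n ih =>
      intro P hX
      by_cases hlt : P.degree < N.degree
      · exact ⟨0, P, by rw [opMul_zero_left, zero_add], hlt⟩
      · push_neg at hlt
        have hX0 : P ≠ 0 := by
          intro h; rw [h, Polynomial.degree_zero] at hlt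
          exact absurd (lt_of_le_of_lt hlt hNbot) (lt_irrefl _)
        obtain ⟨G, Y, hGY, hYlt⟩ := sub_step C N P hN hX0 hlt
        have hYnd : Y.natDegree ≤ n := by
          by_cases hY0 : Y = 0
          · simp [hY0]
          · have h1 := Polynomial.natDegree_lt_natDegree hY0 hYlt
            omega
        obtain ⟨Q', R, hQR, hRlt⟩ := ih Y hYnd
        exact ⟨G + Q', R, by rw [opMul_add_left, hGY, hQR]; ring, hRlt⟩

lemma lclm_dvd {L M N : DOp C}
    (hmon : N.Monic) (hA : ∃ A, N = opMul C A L) (hB : ∃ B, N = opMul C B M)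
    (hmin : ∀ N' : DOp C, N'.Monic → (∃ A, N' = opMul C A L) → (∃ B, N' = opMul C B M) →
      N.natDegree ≤ N'.natDegree)
    (W : DOp C) (hXL : ∃ Q, W = opMul C Q L) (hXM : ∃ Q, W = opMul C Q M) :
    ∃ Q, W = opMul C Q N := by
  obtain ⟨A, hA⟩ := hA
  obtain ⟨B, hB⟩ := hB
  obtain ⟨QL, hQL⟩ := hXL
  obtain ⟨QM, hQM⟩ := hXM
  obtain ⟨Q, R, hQR, hRlt⟩ := opDiv C N hmon W
  suffices hR0 : R = 0 by exact ⟨Q, by rw [hQR, hR0, add_zero]⟩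
  by_contra hR0
  have hRL : R = opMul C (QL - opMul C Q A) L := by
    rw [opMul_sub_left, ← hQL, opMul_assoc, ← hA]
    rw [hQR]; ring
  have hRM : R = opMul C (QM - opMul C Q B) M := by
    rw [opMul_sub_left, ← hQM, opMul_assoc, ← hB]
    rw [hQR]; ring
  set c := R.leadingCoeff with hc
  have hc0 : c ≠ 0 := Polynomial.leadingCoeff_ne_zero.mpr hR0
  have hmonR : (Polynomial.C c⁻¹ * R).Monic := by
    unfold Polynomial.Monic
    rw [Polynomial.leadingCoeff_mul, Polynomial.leadingCoeff_C, inv_mul_cancel₀ hc0]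
  have h1 := hmin (Polynomial.C c⁻¹ * R) hmonR
    ⟨Polynomial.C c⁻¹ * (QL - opMul C Q A), by rw [opMul_C_mul_left, ← hRL]⟩
    ⟨Polynomial.C c⁻¹ * (QM - opMul C Q B), by rw [opMul_C_mul_left, ← hRM]⟩
  rw [Polynomial.natDegree_C_mul (inv_ne_zero hc0)] at h1
  exact absurd (Polynomial.natDegree_lt_natDegree hR0 hRlt) (not_lt.mpr h1)



/-- The "Euler" operator: multiply each coefficient by its exponent. -/
def Eop (f : HahnSeries ℚ C) : HahnSeries ℚ C :=
  { coeff := fun γ => γ • f.coeff γ,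
    isPWO_support' := f.isPWO_support.mono (by
      intro γ hγ
      simp only [Function.mem_support, ne_eq] at hγ ⊢
      intro hc
      exact hγ (by rw [hc, smul_zero]) ) }

lemma Eop_coeff (f : HahnSeries ℚ C) (γ : ℚ) : (Eop C f).coeff γ = γ • f.coeff γ := rfl

lemma Eop_support (f : HahnSeries ℚ C) : (Eop C f).support ⊆ f.support := by
  intro γ hγ
  simp only [HahnSeries.mem_support, Eop_coeff, ne_eq] at hγ ⊢
  intro hc; exact hγ (by rw [hc, smul_zero])

lemma hderiv_eq (f : HahnSeries ℚ C) :
    hderiv C f = HahnSeries.single (-1 : ℚ) (1 : C) * Eop C f := by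
  ext γ
  have h1 : (HahnSeries.single (-1 : ℚ) (1 : C) * Eop C f).coeff ((γ+1) + (-1)) =
      1 * (Eop C f).coeff (γ+1) := HahnSeries.coeff_single_mul_add
  have h2 : (hderiv C f).coeff ((OrderIso.addRight (-1 : ℚ)).toOrderEmbedding (γ+1)) =
      (Eop C f).coeff (γ+1) := HahnSeries.embDomain_coeff
  have e : (γ+1) + (-1 : ℚ) = γ := by ring
  rw [e] at h1
  rw [show ((OrderIso.addRight (-1 : ℚ)).toOrderEmbedding (γ+1)) = γ by
    exact e] at h2
  rw [h2] at *
  rw [h1, one_mul]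

lemma hderiv_coeff (f : HahnSeries ℚ C) (γ : ℚ) :
    (hderiv C f).coeff γ = (γ + 1) • f.coeff (γ + 1) := by
  rw [hderiv_eq]
  have h1 : (HahnSeries.single (-1 : ℚ) (1 : C) * Eop C f).coeff ((γ+1) + (-1)) =
      1 * (Eop C f).coeff (γ+1) := HahnSeries.coeff_single_mul_add
  rw [show (γ+1) + (-1 : ℚ) = γ by ring] at h1
  rw [h1, one_mul, Eop_coeff]

lemma hderiv_zero : hderiv C 0 = 0 := by
  ext γ; rw [hderiv_coeff]; simp

lemma hderiv_add (f g : HahnSeries ℚ C) :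
    hderiv C (f + g) = hderiv C f + hderiv C g := by
  ext γ; simp [hderiv_coeff, smul_add]

lemma Eop_mul (f g : HahnSeries ℚ C) :
    Eop C (f * g) = Eop C f * g + f * Eop C g := by
  ext γ
  rw [HahnSeries.coeff_add, Eop_coeff,
    HahnSeries.coeff_mul_left' f.isPWO_support (Eop_support C f),
    HahnSeries.coeff_mul_right' g.isPWO_support (Eop_support C g),
    HahnSeries.coeff_mul, Finset.smul_sum, ← Finset.sum_add_distrib]
  refine Finset.sum_congr rfl fun ij hij => ?_
  rw [Finset.mem_addAntidiagonal] at hij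
  rw [Eop_coeff, Eop_coeff, ← hij.2.2, add_smul, smul_mul_assoc, mul_smul_comm]

lemma hderiv_mul (f g : HahnSeries ℚ C) :
    hderiv C (f * g) = hderiv C f * g + f * hderiv C g := by
  rw [hderiv_eq, hderiv_eq, hderiv_eq, Eop_mul, mul_add]
  ring



lemma dinf_zero : dinf C 0 = 0 := by rw [dinf, hderiv_zero]; simp

lemma dinf_add (f g : HahnSeries ℚ C) : dinf C (f + g) = dinf C f + dinf C g := by
  rw [dinf, dinf, dinf, hderiv_add]; ring

lemma dinf_mul (f g : HahnSeries ℚ C) :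
    dinf C (f * g) = f * dinf C g + dinf C f * g := by
  rw [dinf, dinf, dinf, hderiv_mul]; ring

lemma delta_props {δ : HahnSeries ℚ C → HahnSeries ℚ C}
    (hδ : δ ∈ ({hderiv C, dinf C} : Set (HahnSeries ℚ C → HahnSeries ℚ C))) :
    δ 0 = 0 ∧ (∀ f g, δ (f + g) = δ f + δ g) ∧
      (∀ f g, δ (f * g) = f * δ g + δ f * g) := by
  rcases hδ with h | h <;> subst h
  · exact ⟨hderiv_zero C, hderiv_add C, fun f g => by rw [hderiv_mul]; ring⟩
  · exact ⟨dinf_zero C, dinf_add C, dinf_mul C⟩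



variable {δ : HahnSeries ℚ C → HahnSeries ℚ C} {ι : RatFunc C →+* HahnSeries ℚ C}

lemma localApply_add_op (P P' : DOp C) (f : HahnSeries ℚ C) :
    localApply C δ ι (P + P') f = localApply C δ ι P f + localApply C δ ι P' f := by
  unfold localApply
  exact Polynomial.sum_add_index P P' _ (fun i => by simp) (fun i a b => by
    rw [map_add, add_mul])

lemma localApply_monomial (n : ℕ) (a : RatFunc C) (f : HahnSeries ℚ C) :
    localApply C δ ι (Polynomial.monomial n a) f = ι a * δ^[n] f :=
  Polynomial.sum_monomial_index a _ (by simp)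

lemma localApply_C_mul (a : RatFunc C) (P : DOp C) (f : HahnSeries ℚ C) :
    localApply C δ ι (Polynomial.C a * P) f = ι a * localApply C δ ι P f := by
  unfold localApply
  rw [← smul_eq_C_mul, Polynomial.sum_smul_index _ _ _ (fun i => by simp),
    Polynomial.sum_def, Polynomial.sum_def, Finset.mul_sum]
  exact Finset.sum_congr rfl fun i _ => by rw [map_mul, mul_assoc]

lemma iter_delta_zero (h0 : δ 0 = 0) (i : ℕ) : δ^[i] (0 : HahnSeries ℚ C) = 0 := by
  induction i with
  | zero => rfl
  | succ i ih => rw [Function.iterate_succ_apply', ih, h0]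

lemma localApply_zero_fun (h0 : δ 0 = 0) (P : DOp C) :
    localApply C δ ι P 0 = 0 := by
  unfold localApply
  rw [Polynomial.sum_def]
  exact Finset.sum_eq_zero fun i _ => by rw [iter_delta_zero C h0, mul_zero]

lemma localApply_Dmul
    (hδ : δ ∈ ({hderiv C, dinf C} : Set (HahnSeries ℚ C → HahnSeries ℚ C)))
    (hι : IsExpansion C δ ι) (P : DOp C) (f : HahnSeries ℚ C) :
    localApply C δ ι (Dmul C P) f = δ (localApply C δ ι P f) := by
  obtain ⟨h0, hadd, hmul⟩ := delta_props C hδ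
  induction P using Polynomial.induction_on' with
  | add p q hp hq =>
      rw [Dmul_add, localApply_add_op, localApply_add_op, hp, hq, hadd]
  | monomial n a =>
      rw [Dmul_monomial, localApply_add_op, localApply_monomial, localApply_monomial,
        localApply_monomial, hmul, Function.iterate_succ_apply', ← hι]

lemma localApply_iter_Dmul
    (hδ : δ ∈ ({hderiv C, dinf C} : Set (HahnSeries ℚ C → HahnSeries ℚ C)))
    (hι : IsExpansion C δ ι) (k : ℕ) (P : DOp C) (f : HahnSeries ℚ C) :
    localApply C δ ι ((Dmul C)^[k] P) f = δ^[k] (localApply C δ ι P f) := by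
  induction k with
  | zero => rfl
  | succ k ih =>
      rw [Function.iterate_succ_apply', Function.iterate_succ_apply',
        localApply_Dmul C hδ hι, ih]

lemma localApply_opMul
    (hδ : δ ∈ ({hderiv C, dinf C} : Set (HahnSeries ℚ C → HahnSeries ℚ C)))
    (hι : IsExpansion C δ ι) (Q L : DOp C) (f : HahnSeries ℚ C) :
    localApply C δ ι (opMul C Q L) f = localApply C δ ι Q (localApply C δ ι L f) := by
  induction Q using Polynomial.induction_on' with
  | add p q hp hq =>
      rw [opMul_add_left, localApply_add_op, localApply_add_op, hp, hq]
  | monomial n a =>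
      rw [opMul_monomial, localApply_C_mul, localApply_iter_Dmul C hδ hι,
        localApply_monomial]



lemma CI_transfer {L N P A : DOp C} (hA : N = opMul C A L)
    (h : CompletelyIntegral C N P) : CompletelyIntegral C L P := by
  intro δ hδ ι hι f hf
  apply h δ hδ ι hι f
  rw [hA, localApply_opMul C hδ hι, hf, localApply_zero_fun C (delta_props C hδ).1]

/-- Lemma (lclm and pseudoconstants): if `N = lclm(L,M)` with `V(N) = V(L) + V(M)`,
and `[P]_N` is a nonzero completely integral element (resp. a pseudoconstant),
then so is `[P]_L` or `[P]_M`. -/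
theorem lclm_pseudoconstant (L M N P : DOp C) (hN : IsLCLM C L M N)
    (F : DiffExt C)
    (hV : ∀ f : F.carrier, F.apply C N f = 0 ↔
      ∃ g h : F.carrier, F.apply C L g = 0 ∧ F.apply C M h = 0 ∧ f = g + h)
    (hVloc : ∀ δ ∈ ({hderiv C, dinf C} : Set (HahnSeries ℚ C → HahnSeries ℚ C)),
      ∀ ι : RatFunc C →+* HahnSeries ℚ C, IsExpansion C δ ι →
        ∀ f : HahnSeries ℚ C, localApply C δ ι N f = 0 ↔
          ∃ g h, localApply C δ ι L g = 0 ∧ localApply C δ ι M h = 0 ∧ f = g + h) :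
    (CompletelyIntegral C N P ∧ ¬ IsZeroClass C N P →
      (CompletelyIntegral C L P ∧ ¬ IsZeroClass C L P) ∨
      (CompletelyIntegral C M P ∧ ¬ IsZeroClass C M P)) ∧
    (IsPseudoconstant C N P →
      IsPseudoconstant C L P ∨ IsPseudoconstant C M P) := by
  obtain ⟨hmon, hAe, hBe, hmin⟩ := hN
  obtain ⟨A, hA⟩ := hAe
  obtain ⟨B, hB⟩ := hBe
  constructor
  · rintro ⟨hci, hnz⟩
    by_cases hz : IsZeroClass C L P
    · right
      refine ⟨CI_transfer C hB hci, fun hzM => hnz ?_⟩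
      exact lclm_dvd C hmon ⟨A, hA⟩ ⟨B, hB⟩ hmin P hz hzM
    · left; exact ⟨CI_transfer C hA hci, hz⟩
  · rintro ⟨hci, hnc⟩
    by_cases hc : IsConstantClass C L P
    · right
      refine ⟨CI_transfer C hB hci, fun hcM => hnc ?_⟩
      exact lclm_dvd C hmon ⟨A, hA⟩ ⟨B, hB⟩ hmin (Dmul C P) hc hcM
    · left; exact ⟨CI_transfer C hA hci, hc⟩


end
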